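/- Let x, y : ℝ → ℝ be differentiable functions satisfying the system x′(t) = −2·x(t)·(3x(t) − y(t))·(x(t) + y(t)) and y′(t) = 2·y(t)·(x(t) − 3y(t))·(x(t) + y(t)). Then for all t: d/dt [ (x(t) + y(t))² ] = −2·(x(t) + y(t))²·( 6x(t)² − 4x(t)y(t) + 6y(t)² ) ≤ 0. In particular V(x,y) = (x+y)² is a Lyapunov function for the system. -/

import Mathlib

/-- For the planar restriction of the bracket flow
`x′ = −2x(3x−y)(x+y)`, `y′ = 2y(x−3y)(x+y)`, the function `V(x,y) = (x+y)²` satisfies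
`d/dt (x+y)² = −2(x+y)²(6x² − 4xy + 6y²) ≤ 0`, so `V` is a Lyapunov function. -/
theorem lyapunov_planar_bracket_flow (x y : ℝ → ℝ)
    (hx : ∀ t, HasDerivAt x (-2 * x t * (3 * x t - y t) * (x t + y t)) t)
    (hy : ∀ t, HasDerivAt y (2 * y t * (x t - 3 * y t) * (x t + y t)) t) :
    ∀ t, HasDerivAt (fun s => (x s + y s)^2)
        (-2 * (x t + y t)^2 * (6 * (x t)^2 - 4 * x t * y t + 6 * (y t)^2)) t ∧
      -2 * (x t + y t)^2 * (6 * (x t)^2 - 4 * x t * y t + 6 * (y t)^2) ≤ 0 := by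
  intro t
  constructor
  · have h := (((hx t).add (hy t)).pow 2)
    change HasDerivAt (fun s => (x s + y s)^2) (((2:ℕ):ℝ) * (x t + y t) ^ (2 - 1) * _) t at h
    convert h using 1
    ring
  · have h1 : (0:ℝ) ≤ (x t + y t)^2 := sq_nonneg _
    nlinarith [sq_nonneg (x t - y t), sq_nonneg (x t + y t), sq_nonneg (x t), sq_nonneg (y t), mul_nonneg h1 (sq_nonneg (x t)), mul_nonneg h1 (sq_nonneg (y t)), mul_nonneg h1 (sq_nonneg (x t - y t))]
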